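/- arXiv:1709.10410 — 4 statements merged into one kernel-verified Lean document; each statement's English description precedes it below -/
import Mathlib

section
/- Let μ be a nonzero complex number and Φ(z) = z·q(z)^T/(1 − γ·p(z))^T a rational function analytic on the closed unit disk (with 1 − γ·p(z) ≠ 0 there). Then the polynomial λ ↦ (λ^N − γ λ^N p(1/λ))^T − μ λ^{T−1}(λ^{N−1} q(1/λ))^T has all its roots in the open unit disk if and only if 1/μ does not belong to the image Φ(D̄) of the closed unit disk under Φ. -/
open Complex Metric

/-- Schur stability of the characteristic polynomial of the combined
control scheme is equivalent to `1/μ` avoiding the image of the closed unit disk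
under `Φ(z) = z q(z)^T / (1 - γ p(z))^T`. -/
theorem stmt0 (T N : ℕ) (hT : 0 < T) (hN : 0 < N) (γ : ℝ) (hγ : γ ∈ Set.Ico (0:ℝ) 1)
    (a b : ℕ → ℂ) (μ : ℂ) (hμ : μ ≠ 0)
    (q : ℂ → ℂ) (hq : ∀ z, q z = ∑ j ∈ Finset.range N, a j * z ^ j)
    (p : ℂ → ℂ) (hp : ∀ z, p z = ∑ j ∈ Finset.range N, b j * z ^ (j + 1))
    (hden : ∀ z ∈ closedBall (0:ℂ) 1, 1 - (γ:ℂ) * p z ≠ 0)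
    (Φ : ℂ → ℂ) (hΦ : ∀ z, Φ z = z * (q z) ^ T / (1 - (γ:ℂ) * p z) ^ T)
    (F : ℂ → ℂ)
    (hF : ∀ lam : ℂ,
      F lam = (lam ^ N - (γ:ℂ) * ∑ j ∈ Finset.range N, b j * lam ^ (N - 1 - j)) ^ T
        - μ * lam ^ (T - 1) * (∑ j ∈ Finset.range N, a j * lam ^ (N - 1 - j)) ^ T) :
    (∀ lam : ℂ, F lam = 0 → ‖lam‖ < 1) ↔ 1 / μ ∉ Φ '' closedBall (0:ℂ) 1 := by
  have hTle : T ≤ N * T := Nat.le_mul_of_pos_left T hN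
  -- Key factorization: for lam ≠ 0,
  -- F lam = lam^(N*T-1) * (lam * (1 - γ p(1/lam))^T - μ * q(1/lam)^T)
  have key : ∀ lam : ℂ, lam ≠ 0 →
      F lam = lam ^ (N * T - 1) *
        (lam * (1 - (γ:ℂ) * p lam⁻¹) ^ T - μ * (q lam⁻¹) ^ T) := by
    intro lam hlam
    have hpow : ∀ j ∈ Finset.range N, lam ^ (N - 1 - j) = lam ^ (N - 1) * (lam⁻¹) ^ j := by
      intro j hj
      rw [Finset.mem_range] at hj
      rw [inv_pow, eq_comm, mul_inv_eq_iff_eq_mul₀ (pow_ne_zero _ hlam), ← pow_add]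
      congr 1; omega
    have hNs : lam ^ N = lam ^ (N - 1) * lam := by
      rw [← pow_succ]; congr 1; omega
    have hsa : (∑ j ∈ Finset.range N, a j * lam ^ (N - 1 - j)) = lam ^ (N - 1) * q lam⁻¹ := by
      rw [hq, Finset.mul_sum]
      refine Finset.sum_congr rfl fun j hj => ?_
      rw [hpow j hj]; ring
    have hsb : (∑ j ∈ Finset.range N, b j * lam ^ (N - 1 - j)) = lam ^ N * p lam⁻¹ := by
      rw [hp, Finset.mul_sum]
      refine Finset.sum_congr rfl fun j hj => ?_
      rw [hpow j hj, hNs, pow_succ]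
      have h1 : lam * lam⁻¹ = 1 := mul_inv_cancel₀ hlam
      linear_combination (-(b j * lam ^ (N - 1) * lam⁻¹ ^ j)) * h1
    rw [hF, hsa, hsb]
    have e1 : lam ^ N - (γ:ℂ) * (lam ^ N * p lam⁻¹) = lam ^ N * (1 - (γ:ℂ) * p lam⁻¹) := by
      ring
    have f1 : lam ^ (N * T) = lam ^ (N * T - 1) * lam := by
      rw [← pow_succ]; congr 1; omega
    have f2 : lam ^ (T - 1) * lam ^ ((N - 1) * T) = lam ^ (N * T - 1) := by
      rw [← pow_add]; congr 1
      have : (N - 1) * T = N * T - 1 * T := Nat.sub_mul N 1 T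
      omega
    rw [e1, mul_pow, ← pow_mul, mul_pow, ← pow_mul, f1]
    linear_combination (-μ * (q lam⁻¹) ^ T) * f2
  constructor
  · intro h hmem
    rcases hmem with ⟨w, hw, hΦw⟩
    rcases eq_or_ne w 0 with rfl | hw0
    · rw [hΦ] at hΦw
      simp at hΦw
      exact hμ hΦw.symm
    · set lam := w⁻¹ with hlamdef
      have hlam : lam ≠ 0 := inv_ne_zero hw0
      have hwn : ‖w‖ ≤ 1 := by simpa [mem_closedBall_zero_iff] using hw
      have hlamn : 1 ≤ ‖lam‖ := by
        rw [norm_inv]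
        exact (one_le_inv₀ (norm_pos_iff.mpr hw0)).mpr hwn
      have hdw : (1 - (γ:ℂ) * p w) ^ T ≠ 0 := pow_ne_zero _ (hden w hw)
      have hinv : lam⁻¹ = w := inv_inv w
      have hFlam : F lam = 0 := by
        rw [key lam hlam, hinv]
        have heq : lam * (1 - (γ:ℂ) * p w) ^ T - μ * (q w) ^ T = 0 := by
          rw [hΦ] at hΦw
          field_simp at hΦw
          have hwl : w * lam = 1 := by
            rw [hlamdef, mul_inv_cancel₀ hw0]
          linear_combination (-lam) * hΦw + μ * (q w) ^ T * hwl
        rw [heq, mul_zero]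
      have := h lam hFlam
      linarith
  · intro h lam hFlam
    by_contra hn
    push_neg at hn
    have hlam : lam ≠ 0 := by
      intro h0
      rw [h0] at hn
      simp at hn
      linarith
    set w := lam⁻¹ with hwdef
    have hwmem : w ∈ closedBall (0:ℂ) 1 := by
      rw [mem_closedBall_zero_iff, norm_inv]
      exact inv_le_one_of_one_le₀ hn
    have hdw : (1 - (γ:ℂ) * p w) ^ T ≠ 0 := pow_ne_zero _ (hden w hwmem)
    have hpowne : lam ^ (N * T - 1) ≠ 0 := pow_ne_zero _ hlam
    have heq : lam * (1 - (γ:ℂ) * p w) ^ T - μ * (q w) ^ T = 0 := by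
      have := key lam hlam
      rw [hFlam] at this
      exact (mul_eq_zero.mp this.symm).resolve_left hpowne
    apply h
    refine ⟨w, hwmem, ?_⟩
    rw [hΦ]
    have hwl : w * lam = 1 := by rw [hwdef, inv_mul_cancel₀ hlam]
    field_simp
    linear_combination (-w) * heq + (1 - (γ:ℂ) * p w) ^ T * hwl
end

section
/- For any complex μ, the polynomial λ ↦ (λ − ε)^T − μ(1 − ε)^T λ^{T−1} (with 0 ≤ ε < 1, T ≥ 1) has all roots in the open unit disk D if and only if 1/μ ∉ Φ(D̄), where Φ(z) = (1−ε)^T z/(1−εz)^T. -/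
open Complex Metric

/-- all roots of `(λ - ε)^T - μ (1-ε)^T λ^{T-1}` lie in the open unit
disk iff `1/μ ∉ Φ(D̄)` where `Φ(z) = (1-ε)^T z/(1-εz)^T`. -/
theorem stmt1 (T : ℕ) (hT : 0 < T) (ε : ℝ) (hε : ε ∈ Set.Ico (0:ℝ) 1)
    (μ : ℂ) (hμ : μ ≠ 0)
    (Φ : ℂ → ℂ) (hΦ : ∀ z, Φ z = (1 - (ε:ℂ)) ^ T * z / (1 - (ε:ℂ) * z) ^ T) :
    (∀ lam : ℂ, (lam - (ε:ℂ)) ^ T - μ * (1 - (ε:ℂ)) ^ T * lam ^ (T - 1) = 0 → ‖lam‖ < 1)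
      ↔ 1 / μ ∉ Φ '' closedBall (0:ℂ) 1 := by
  obtain ⟨n, rfl⟩ : ∃ n, T = n + 1 := ⟨T - 1, (Nat.succ_pred_eq_of_pos hT).symm⟩
  have hε0 : (0:ℝ) ≤ ε := hε.1
  have hε1R : ε < 1 := hε.2
  have hε1 : (1 : ℂ) - (ε:ℂ) ≠ 0 := by
    rw [sub_ne_zero]
    intro h
    have : (1:ℝ) = ε := by exact_mod_cast h
    linarith
  -- a point z with ‖z‖ ≤ 1 has 1 - ε z ≠ 0
  have hden : ∀ z : ℂ, ‖z‖ ≤ 1 → (1 : ℂ) - (ε:ℂ) * z ≠ 0 := by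
    intro z hz h
    have h1 : (ε:ℂ) * z = 1 := by linear_combination -h
    have : ‖(ε:ℂ) * z‖ = 1 := by rw [h1]; simp
    rw [norm_mul, Complex.norm_real, Real.norm_eq_abs, _root_.abs_of_nonneg hε0] at this
    nlinarith
  -- key algebraic equivalence
  have key : ∀ z : ℂ, z ≠ 0 → (1 - (ε:ℂ) * z) ≠ 0 →
      (((z⁻¹ - (ε:ℂ)) ^ (n+1) - μ * (1 - (ε:ℂ)) ^ (n+1) * (z⁻¹) ^ n = 0) ↔
        (1 - (ε:ℂ)) ^ (n+1) * z / (1 - (ε:ℂ) * z) ^ (n+1) = 1 / μ) := by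
    intro z hz0 hz1
    have hfac : (z⁻¹ - (ε:ℂ)) ^ (n+1) - μ * (1 - (ε:ℂ)) ^ (n+1) * (z⁻¹) ^ n
        = (z⁻¹) ^ (n+1) * ((1 - (ε:ℂ) * z) ^ (n+1) - μ * (1 - (ε:ℂ)) ^ (n+1) * z) := by
      have e1 : z⁻¹ - (ε:ℂ) = z⁻¹ * (1 - (ε:ℂ) * z) := by
        rw [mul_sub, mul_one, ← mul_assoc, mul_comm z⁻¹ (ε:ℂ), mul_assoc, inv_mul_cancel₀ hz0, mul_one]
      have e2 : (z⁻¹) ^ n = (z⁻¹) ^ (n+1) * z := by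
        rw [pow_succ, mul_assoc, inv_mul_cancel₀ hz0, mul_one]
      rw [e1, mul_pow, e2]
      ring
    rw [hfac, mul_eq_zero]
    have hzinv : (z⁻¹) ^ (n+1) ≠ 0 := pow_ne_zero _ (inv_ne_zero hz0)
    rw [div_eq_div_iff (pow_ne_zero _ hz1) hμ]
    constructor
    · rintro (h | h)
      · exact absurd h hzinv
      · linear_combination -h
    · intro h
      right
      linear_combination -h
  constructor
  · rintro hA ⟨z, hz, hΦz⟩
    rw [hΦ] at hΦz
    rw [mem_closedBall, dist_zero_right] at hz
    have hz0 : z ≠ 0 := by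
      rintro rfl
      simp only [mul_zero, zero_div] at hΦz
      exact hμ (by simpa [one_div, inv_eq_zero] using hΦz.symm)
    have h1 := (key z hz0 (hden z hz)).mpr hΦz
    have := hA z⁻¹ (by simpa using h1)
    rw [norm_inv] at this
    have hzpos : 0 < ‖z‖ := norm_pos_iff.mpr hz0
    rw [inv_lt_one_iff₀] at this
    rcases this with h | h
    · linarith
    · linarith
  · intro h lam hlam
    by_contra hl
    push_neg at hl
    have hlam0 : lam ≠ 0 := by
      intro h0
      rw [h0, norm_zero] at hl
      linarith
    have hz : ‖lam⁻¹‖ ≤ 1 := by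
      rw [norm_inv]
      exact inv_le_one_of_one_le₀ hl
    have hlame : lam - (ε:ℂ) ≠ 0 := by
      rw [sub_ne_zero]
      intro h0
      rw [h0, Complex.norm_real, Real.norm_eq_abs, _root_.abs_of_nonneg hε0] at hl
      linarith
    have hden' : (1 : ℂ) - (ε:ℂ) * lam⁻¹ ≠ 0 := hden _ hz
    have h1 := (key lam⁻¹ (inv_ne_zero hlam0) hden').mp (by
      rw [inv_inv]
      simpa using hlam)
    exact h ⟨lam⁻¹, by rwa [mem_closedBall, dist_zero_right], by rw [hΦ]; exact h1⟩
end

section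
/- For T ≥ 3 and ε ∈ [0, 1/(T−1)), the function Φ(z) = (1−ε)^T z/(1−εz)^T is injective on the open unit disk D; moreover for ε > 1/(T−1) (with ε < 1) it fails to be injective on D. -/
open Complex Metric

lemma sumA (m : ℕ) (x : ℝ) :
    ∑ k ∈ Finset.range (m+1), ((k:ℝ)+1) * ((m+1).choose (k+1) : ℝ) * x^(k+1)
      = ((m:ℝ)+1) * x * (x+1)^m := by
  rw [add_pow, Finset.mul_sum]
  refine Finset.sum_congr rfl fun k hk => ?_
  have h : (((m+1).choose (k+1) * (k+1) : ℕ) : ℝ) = (((m+1) * m.choose k : ℕ) : ℝ) := by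
    rw [← Nat.add_one_mul_choose_eq]
  push_cast at h
  linear_combination x^(k+1) * h

lemma sumB (m : ℕ) (x : ℝ) :
    ∑ k ∈ Finset.range (m+1), (((m+1).choose (k+1) : ℝ)) * x^(k+1) = (x+1)^(m+1) - 1 := by
  have h := add_pow x 1 (m+1)
  rw [Finset.sum_range_succ'] at h
  simp only [one_pow, mul_one, pow_zero, one_mul, Nat.choose_zero_right, Nat.cast_one] at h
  rw [h, add_sub_cancel_right]
  exact Finset.sum_congr rfl fun k hk => by ring

lemma mainBound (T : ℕ) (hT : 1 ≤ T) (x : ℝ) (hx : 0 ≤ x) (h : x * ((T:ℝ) - 1) < 1) :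
    ∑ k ∈ Finset.range T, (T.choose (k+1) : ℝ) * x^(k+1) * k < 1 := by
  obtain ⟨m, rfl⟩ : ∃ m, T = m+1 := ⟨T-1, by omega⟩
  have e1 : ∑ k ∈ Finset.range (m+1), ((m+1).choose (k+1):ℝ) * x^(k+1) * k
      = (((m:ℝ)+1)*x*(x+1)^m) - ((x+1)^(m+1) - 1) := by
    rw [← sumA m x, ← sumB m x, ← Finset.sum_sub_distrib]
    exact Finset.sum_congr rfl fun k _ => by ring
  rw [e1]
  have hx1 : (0:ℝ) < x + 1 := by linarith
  have hp : (0:ℝ) < (x+1)^m := pow_pos hx1 m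
  have hxm : x * (m:ℝ) < 1 := by push_cast at h; linarith
  have hlt : ((m:ℝ)+1)*x < x + 1 := by nlinarith
  have hps : (x+1)^(m+1) = (x+1)^m*(x+1) := pow_succ _ _
  nlinarith [mul_lt_mul_of_pos_right hlt hp]

lemma keyIdentity (T : ℕ) (e z w : ℂ) :
    z * (1 - e*w)^T - w * (1 - e*z)^T
      = ∑ k ∈ Finset.range (T+1), (T.choose k : ℂ) * (-e)^k * (z * w^k - w * z^k) := by
  rw [show (1 - e*w) = (-(e*w)+1) by ring, show (1 - e*z) = (-(e*z)+1) by ring,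
    add_pow, add_pow, Finset.mul_sum, Finset.mul_sum, ← Finset.sum_sub_distrib]
  exact Finset.sum_congr rfl fun k _ => by ring

lemma geomBound (k : ℕ) (z w : ℂ) (hz : ‖z‖ ≤ 1) (hw : ‖w‖ ≤ 1) :
    ‖z * w^(k+1) - w * z^(k+1)‖ ≤ k * ‖z - w‖ := by
  have h := geom_sum₂_mul w z k
  have hfac : z * w^(k+1) - w * z^(k+1)
      = z * w * ((∑ i ∈ Finset.range k, w^i * z^(k-1-i)) * (w - z)) := by
    linear_combination (-(z * w)) * h
  have hS : ‖∑ i ∈ Finset.range k, w^i * z^(k-1-i)‖ ≤ (k:ℝ) := by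
    refine le_trans (norm_sum_le _ _) ?_
    calc ∑ i ∈ Finset.range k, ‖w^i * z^(k-1-i)‖
        ≤ ∑ i ∈ Finset.range k, 1 := by
          refine Finset.sum_le_sum fun i _ => ?_
          rw [norm_mul, norm_pow, norm_pow]
          exact mul_le_one₀ (pow_le_one₀ (norm_nonneg _) hw) (pow_nonneg (norm_nonneg _) _)
            (pow_le_one₀ (norm_nonneg _) hz)
      _ = (k:ℝ) := by simp
  rw [hfac, norm_mul, norm_mul, norm_mul, norm_sub_rev w z]
  calc ‖z‖ * ‖w‖ * (‖∑ i ∈ Finset.range k, w^i * z^(k-1-i)‖ * ‖z - w‖)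
      ≤ 1 * 1 * ((k:ℝ) * ‖z - w‖) := by gcongr
    _ = k * ‖z - w‖ := by ring

/-- for `T ≥ 3`, `Φ(z) = (1-ε)^T z/(1-εz)^T` is injective on the open
unit disk iff `ε ∈ [0, 1/(T-1))`; it fails to be injective for `ε ∈ (1/(T-1), 1)`. -/
theorem stmt5 (T : ℕ) (hT : 3 ≤ T) (Φ : ℝ → ℂ → ℂ)
    (hΦ : ∀ (ε : ℝ) (z : ℂ), Φ ε z = (1 - (ε:ℂ)) ^ T * z / (1 - (ε:ℂ) * z) ^ T) :
    (∀ ε : ℝ, ε ∈ Set.Ico 0 (1 / ((T:ℝ) - 1)) → Set.InjOn (Φ ε) (ball (0:ℂ) 1)) ∧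
    (∀ ε : ℝ, ε ∈ Set.Ioo (1 / ((T:ℝ) - 1)) 1 → ¬ Set.InjOn (Φ ε) (ball (0:ℂ) 1)) := by
  have hT2 : (2:ℝ) ≤ (T:ℝ) - 1 := by
    have : (3:ℝ) ≤ (T:ℝ) := by exact_mod_cast hT
    linarith
  have hTpos : (0:ℝ) < (T:ℝ) - 1 := by linarith
  constructor
  · rintro ε ⟨hε0, hε1⟩ z hz w hw heq
    have hεT : ε * ((T:ℝ)-1) < 1 := (lt_div_iff₀ hTpos).mp hε1
    have hε1' : ε < 1 := by nlinarith
    have hz1 : ‖z‖ < 1 := mem_ball_zero_iff.mp hz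
    have hw1 : ‖w‖ < 1 := mem_ball_zero_iff.mp hw
    set e : ℂ := (ε : ℂ) with he
    have hnorme : ‖e‖ = ε := by
      rw [he, Complex.norm_real, Real.norm_eq_abs, _root_.abs_of_nonneg hε0]
    have hden : ∀ u : ℂ, ‖u‖ < 1 → (1 : ℂ) - e*u ≠ 0 := by
      intro u hu h
      have h1 : (1:ℂ) = e*u := by linear_combination h
      have h2 : (1:ℝ) = ‖e*u‖ := by rw [← h1]; simp
      rw [norm_mul, hnorme] at h2
      nlinarith [norm_nonneg u]
    have h3 : (1:ℂ) - e ≠ 0 := by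
      intro h
      have h' : ((1 - ε : ℝ) : ℂ) = 0 := by push_cast; linear_combination h
      have : (1:ℝ) - ε = 0 := by exact_mod_cast h'
      linarith
    rw [hΦ, hΦ] at heq
    have hdz := hden z hz1
    have hdw := hden w hw1
    rw [div_eq_div_iff (pow_ne_zero T hdz) (pow_ne_zero T hdw)] at heq
    have hcross : z * (1 - e*w)^T = w * (1 - e*z)^T := by
      apply mul_left_cancel₀ (pow_ne_zero T h3)
      linear_combination heq
    by_contra hne
    have hdpos : 0 < ‖z - w‖ := norm_pos_iff.mpr (sub_ne_zero.mpr hne)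
    have hk := keyIdentity T e z w
    rw [Finset.sum_range_succ'] at hk
    simp only [Nat.choose_zero_right, Nat.cast_one, pow_zero, mul_one, one_mul] at hk
    have hE : z - w = -∑ k ∈ Finset.range T,
        ((T.choose (k+1) : ℂ) * (-e)^(k+1) * (z*w^(k+1) - w*z^(k+1))) := by
      linear_combination hcross - hk
    have hnorm : ‖z - w‖ ≤ ∑ k ∈ Finset.range T,
        (T.choose (k+1) : ℝ) * ε^(k+1) * k * ‖z - w‖ := by
      calc ‖z - w‖
          = ‖∑ k ∈ Finset.range T,
              ((T.choose (k+1) : ℂ) * (-e)^(k+1) * (z*w^(k+1) - w*z^(k+1)))‖ := by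
            rw [hE, norm_neg]
        _ ≤ ∑ k ∈ Finset.range T,
              ‖(T.choose (k+1) : ℂ) * (-e)^(k+1) * (z*w^(k+1) - w*z^(k+1))‖ :=
            norm_sum_le _ _
        _ ≤ ∑ k ∈ Finset.range T, (T.choose (k+1) : ℝ) * ε^(k+1) * k * ‖z - w‖ := by
            refine Finset.sum_le_sum fun k _ => ?_
            rw [norm_mul, norm_mul, norm_pow, norm_neg, hnorme, Complex.norm_natCast]
            calc (T.choose (k+1) : ℝ) * ε^(k+1) * ‖z*w^(k+1) - w*z^(k+1)‖
                ≤ (T.choose (k+1) : ℝ) * ε^(k+1) * ((k:ℝ) * ‖z - w‖) :=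
                  mul_le_mul_of_nonneg_left (geomBound k z w hz1.le hw1.le) (by positivity)
              _ = (T.choose (k+1) : ℝ) * ε^(k+1) * k * ‖z - w‖ := by ring
    have hS : ∑ k ∈ Finset.range T, (T.choose (k+1):ℝ) * ε^(k+1) * k < 1 :=
      mainBound T (by omega) ε hε0 hεT
    have hsum : ∑ k ∈ Finset.range T, (T.choose (k+1):ℝ) * ε^(k+1) * k * ‖z - w‖
        = (∑ k ∈ Finset.range T, (T.choose (k+1):ℝ) * ε^(k+1) * k) * ‖z - w‖ :=
      (Finset.sum_mul _ _ _).symm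
    rw [hsum] at hnorm
    nlinarith
  · rintro ε ⟨hε1, hε2⟩ hinj
    have hε0 : 0 < ε := lt_trans (by positivity) hε1
    have hεT : 1 < ε * ((T:ℝ)-1) := (div_lt_iff₀ hTpos).mp hε1
    obtain ⟨c, hc⟩ : ∃ c : ℝ, c = -(1/(((T:ℝ)-1)*ε)) := ⟨_, rfl⟩
    have hia : (0:ℝ) < ((T:ℝ)-1)*ε := by positivity
    have hcneg : c < 0 := by
      rw [hc]; have : 0 < 1/(((T:ℝ)-1)*ε) := by positivity
      linarith
    have hc1 : -1 < c := by
      rw [hc]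
      have : 1/(((T:ℝ)-1)*ε) < 1 := by
        rw [div_lt_one hia]; nlinarith
      linarith
    have hcmul : ((T:ℝ)-1)*ε*c = -1 := by
      rw [hc]; field_simp
    obtain ⟨a, ha⟩ : ∃ a : ℝ, a = (c-1)/2 := ⟨_, rfl⟩
    have hac : a < c := by rw [ha]; linarith
    have ha1 : -1 < a := by rw [ha]; linarith
    obtain ⟨ψ, hψ⟩ : ∃ ψ : ℝ → ℝ, ψ = fun x => x/(1-ε*x)^T := ⟨_, rfl⟩
    have hposden : ∀ x : ℝ, x ≤ 0 → 0 < 1 - ε*x := fun x hx => by nlinarith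
    have hcont : ContinuousOn ψ (Set.Icc a 0) := by
      rw [hψ]
      apply ContinuousOn.div continuousOn_id
        ((continuous_const.sub (continuous_const.mul continuous_id)).pow T).continuousOn
      intro x hx
      exact pow_ne_zero _ (hposden x hx.2).ne'
    have hanti : StrictAntiOn ψ (Set.Icc a c) := by
      apply strictAntiOn_of_deriv_neg (convex_Icc a c)
        (hcont.mono (Set.Icc_subset_Icc_right hcneg.le))
      intro x hx
      rw [interior_Icc] at hx
      have hx0 : x < 0 := hx.2.trans hcneg
      have hdp : 0 < 1 - ε*x := hposden x hx0.le
      have hdA : HasDerivAt (fun y:ℝ => 1-ε*y) (-ε) x := by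
        simpa using ((hasDerivAt_id x).const_mul ε).const_sub 1
      have hdB := hdA.pow T
      have hdψ' : HasDerivAt (fun y : ℝ => y/(1-ε*y)^T)
          ((1*(1-ε*x)^T - x*((T:ℝ)*(1-ε*x)^(T-1)*(-ε)))/((1-ε*x)^T)^2) x :=
        (hasDerivAt_id x).div hdB (by positivity)
      have hdψ : HasDerivAt ψ
          ((1*(1-ε*x)^T - x*((T:ℝ)*(1-ε*x)^(T-1)*(-ε)))/((1-ε*x)^T)^2) x := by
        rw [hψ]; exact hdψ'
      rw [hdψ.deriv]
      apply div_neg_of_neg_of_pos _ (by positivity)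
      have hp : 0 < (1-ε*x)^(T-1) := pow_pos hdp _
      have hpw : (1-ε*x)^T = (1-ε*x)^(T-1)*(1-ε*x) := by
        rw [← pow_succ]; congr 1; omega
      have hlt : 1 + ((T:ℝ)-1)*ε*x < 0 := by
        nlinarith [mul_lt_mul_of_pos_left hx.2 hia]
      rw [hpw]
      nlinarith [mul_neg_of_pos_of_neg hp hlt]
    have hψa : ψ c < ψ a := hanti ⟨le_rfl, hac.le⟩ ⟨hac.le, le_rfl⟩ hac
    have hψc : ψ c < 0 := by
      rw [hψ]
      exact div_neg_of_neg_of_pos hcneg (pow_pos (hposden c hcneg.le) T)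
    obtain ⟨v, hv⟩ : ∃ v : ℝ, v = min (ψ a) 0 := ⟨_, rfl⟩
    have hvc : ψ c < v := by rw [hv]; exact lt_min hψa hψc
    obtain ⟨x, hxmem, hxv⟩ : v ∈ ψ '' Set.Icc a c := by
      apply intermediate_value_Icc' hac.le (hcont.mono (Set.Icc_subset_Icc_right hcneg.le))
      exact ⟨hvc.le, by rw [hv]; exact min_le_left _ _⟩
    obtain ⟨y, hymem, hyv⟩ : v ∈ ψ '' Set.Icc c 0 := by
      apply intermediate_value_Icc hcneg.le (hcont.mono (Set.Icc_subset_Icc_left hac.le))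
      have hψ0 : ψ 0 = 0 := by rw [hψ]; simp
      rw [hψ0]
      exact ⟨hvc.le, by rw [hv]; exact min_le_right _ _⟩
    have hxy : x ≠ y := by
      intro h
      have hxc : x = c := le_antisymm hxmem.2 (by rw [h]; exact hymem.1)
      rw [hxc] at hxv
      rw [hxv] at hvc
      exact lt_irrefl _ hvc
    have hx1 : |x| < 1 := abs_lt.mpr ⟨lt_of_lt_of_le ha1 hxmem.1, by linarith [hxmem.2]⟩
    have hy1 : |y| < 1 := abs_lt.mpr ⟨by linarith [hymem.1], by linarith [hymem.2]⟩
    have hmx : (x:ℂ) ∈ ball (0:ℂ) 1 := by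
      rw [mem_ball_zero_iff, Complex.norm_real]; exact hx1
    have hmy : (y:ℂ) ∈ ball (0:ℂ) 1 := by
      rw [mem_ball_zero_iff, Complex.norm_real]; exact hy1
    have hval : ∀ r : ℝ, Φ ε r = (((1-ε)^T * ψ r : ℝ) : ℂ) := by
      intro r
      rw [hΦ]
      simp only [hψ]
      push_cast
      ring
    have hcast : (x:ℂ) = (y:ℂ) := hinj hmx hmy (by rw [hval, hval, hxv, hyv])
    exact hxy (by exact_mod_cast hcast)
end

section
/- With q_N = −Σ_{j=1}^N (−1)^j a_j where a_j = 2 tan(π/(2(N+1)))·(1 − j/(N+1))·sin(πj/(N+1)) for j = 1,…,N, one has q_N = tan²(π/(2(N+1))). -/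
open Finset

/-- Telescoping sum of discrete Laplacians. -/
lemma tele13 (s : ℕ → ℝ) (m : ℕ) :
    ∑ j ∈ Finset.Icc 1 m, (2 * s j - s (j+1) - s (j-1))
      = s 1 - s 0 + s m - s (m+1) := by
  induction m with
  | zero => simp
  | succ n ih =>
      rw [Finset.sum_Icc_succ_top (by omega : 1 ≤ n + 1), ih]
      simp only [Nat.add_sub_cancel]
      ring

/-- Summation by parts against a linear weight. -/
lemma keyL13 (s : ℕ → ℝ) (n : ℕ) :
    ∑ j ∈ Finset.Icc 1 n, ((n:ℝ) + 1 - j) * (2 * s j - s (j+1) - s (j-1))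
      = ((n:ℝ) + 1) * s 1 - s (n+1) - n * s 0 := by
  induction n with
  | zero => simp
  | succ n ih =>
      have h1 : ∀ j ∈ Finset.Icc 1 (n+1),
          ((((n:ℕ)+1 : ℕ):ℝ) + 1 - j) * (2 * s j - s (j+1) - s (j-1))
            = ((n:ℝ) + 1 - j) * (2 * s j - s (j+1) - s (j-1))
              + (2 * s j - s (j+1) - s (j-1)) := by
        intro j hj; push_cast; ring
      rw [Finset.sum_congr rfl h1, Finset.sum_add_distrib,
        Finset.sum_Icc_succ_top (by omega : 1 ≤ n + 1), tele13 s (n+1), ih]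
      push_cast
      ring

/-- for the optimal coefficients (case `σ = 2`, `T = 1`)
`a_j = 2 tan(π/(2(N+1))) (1 - j/(N+1)) sin(πj/(N+1))`, one has
`q_N = -Σ_{j=1}^N (-1)^j a_j = tan²(π/(2(N+1)))`. -/
theorem stmt13 (N : ℕ) (hN : 0 < N) (a : ℕ → ℝ)
    (ha : ∀ j, 1 ≤ j → j ≤ N → a j =
      2 * Real.tan (Real.pi / (2 * ((N:ℝ) + 1))) * (1 - (j:ℝ) / ((N:ℝ) + 1))
        * Real.sin (Real.pi * (j:ℝ) / ((N:ℝ) + 1))) :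
    -∑ j ∈ Finset.Icc 1 N, (-1:ℝ) ^ j * a j
      = Real.tan (Real.pi / (2 * ((N:ℝ) + 1))) ^ 2 := by
  have hpi := Real.pi_pos
  set θ : ℝ := Real.pi / (2 * ((N:ℝ) + 1)) with hθdef
  have hN1 : (0:ℝ) < (N:ℝ) + 1 := by positivity
  have hN1ne : ((N:ℝ) + 1) ≠ 0 := ne_of_gt hN1
  have hθpos : 0 < θ := by positivity
  have hNge1 : (1:ℝ) ≤ (N:ℝ) := by exact_mod_cast hN
  have hθlt : θ < Real.pi / 2 := by
    rw [hθdef, div_lt_div_iff₀ (by positivity) (by norm_num)]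
    nlinarith
  have hcos : 0 < Real.cos θ :=
    Real.cos_pos_of_mem_Ioo ⟨by linarith, hθlt⟩
  set s : ℕ → ℝ := fun j => (-1:ℝ)^j * Real.sin (2 * j * θ) with hsdef
  have hs0 : s 0 = 0 := by simp [hsdef]
  have hsN1 : s (N+1) = 0 := by
    have harg : 2 * ((N:ℝ) + 1) * θ = Real.pi := by
      rw [hθdef]; field_simp
    simp only [hsdef, Nat.cast_add, Nat.cast_one, harg, Real.sin_pi, mul_zero]
  have hs1 : s 1 = - Real.sin (2 * θ) := by
    simp [hsdef]
  -- discrete Laplacian of s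
  have hD : ∀ j ∈ Finset.Icc 1 N,
      2 * s j - s (j+1) - s (j-1) = 2 * (1 + Real.cos (2*θ)) * s j := by
    intro j hj
    simp only [Finset.mem_Icc] at hj
    obtain ⟨k, rfl⟩ : ∃ k, j = k + 1 := ⟨j - 1, by omega⟩
    simp only [hsdef, Nat.add_sub_cancel]
    have e1 : 2 * ((k:ℕ)+1+1 : ℕ) * θ = 2 * ((k:ℕ)+1 : ℕ) * θ + 2*θ := by
      push_cast; ring
    have e2 : 2 * (k:ℕ) * θ = 2 * ((k:ℕ)+1 : ℕ) * θ - 2*θ := by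
      push_cast; ring
    rw [e1, e2, Real.sin_add, Real.sin_sub, pow_succ, pow_succ]
    ring
  set E : ℝ := ∑ j ∈ Finset.Icc 1 N, ((N:ℝ) + 1 - j) * s j with hEdef
  have hE : 2 * (1 + Real.cos (2*θ)) * E = -(((N:ℝ) + 1) * Real.sin (2*θ)) := by
    have h := keyL13 s N
    rw [Finset.sum_congr rfl (fun j hj => by rw [hD j hj]), hs0, hsN1, hs1] at h
    rw [hEdef, Finset.mul_sum]
    have hcg : (∑ i ∈ Finset.Icc 1 N, 2 * (1 + Real.cos (2*θ)) * (((N:ℝ) + 1 - i) * s i))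
        = ∑ j ∈ Finset.Icc 1 N, ((N:ℝ) + 1 - j) * (2 * (1 + Real.cos (2*θ)) * s j) :=
      Finset.sum_congr rfl (fun j _ => by ring)
    rw [hcg, h]
    ring
  have hcos2 : 1 + Real.cos (2*θ) = 2 * Real.cos θ ^ 2 := by
    rw [Real.cos_two_mul]; ring
  have hsin2 : Real.sin (2*θ) = 2 * Real.sin θ * Real.cos θ := Real.sin_two_mul θ
  have hEval : E = -(((N:ℝ) + 1) * Real.sin θ / (2 * Real.cos θ)) := by
    rw [hcos2, hsin2] at hE
    field_simp
    nlinarith [hE]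
  have htan : Real.tan θ = Real.sin θ / Real.cos θ := Real.tan_eq_sin_div_cos θ
  -- rewrite the sum
  have hsum : ∑ j ∈ Finset.Icc 1 N, (-1:ℝ) ^ j * a j
      = 2 * Real.tan θ / ((N:ℝ) + 1) * E := by
    rw [hEdef, Finset.mul_sum]
    apply Finset.sum_congr rfl
    intro j hj
    simp only [Finset.mem_Icc] at hj
    rw [ha j hj.1 hj.2]
    have harg : Real.pi * (j:ℝ) / ((N:ℝ) + 1) = 2 * (j:ℝ) * θ := by
      rw [hθdef]; field_simp
    rw [harg, hsdef]
    have hjle : (j:ℝ) ≤ (N:ℝ) + 1 := by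
      have : (j:ℝ) ≤ (N:ℝ) := by exact_mod_cast hj.2
      linarith
    field_simp
  rw [hsum, hEval, htan]
  field_simp
end
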